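/- Let N ≥ 1 and L ≥ 1 be natural numbers, let x : Fin L → ZMod N be inputs, and let r : Fin L → Fin L → ZMod N be pairwise masks satisfying r i i = 0 for all i and r i j + r j i = 0 for all i, j. Define the masked values x̃_i = x_i + Σ_{j ≠ i} r i j. Then Σ_{i} x̃_i = Σ_{i} x_i in ZMod N. -/

import Mathlib

/-- Correctness of secure aggregation: if each participant `i` masks its input
`x_i` by adding pairwise masks `r i j` (over `j ≠ i`) satisfying `r i i = 0` and
`r i j + r j i = 0` in `ZMod N`, then the sum of the masked values equals the sum
of the inputs modulo `N`. -/
theorem secure_aggregation_correct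
    (N L : ℕ) (hN : 1 ≤ N) (hL : 1 ≤ L)
    (x : Fin L → ZMod N) (r : Fin L → Fin L → ZMod N)
    (hdiag : ∀ i, r i i = 0)
    (hanti : ∀ i j, r i j + r j i = 0) :
    ∑ i, (x i + ∑ j ∈ Finset.univ.filter fun j => j ≠ i, r i j) = ∑ i, x i := by
  rw [Finset.sum_add_distrib]
  have h1 : ∀ i : Fin L, (∑ j ∈ Finset.univ.filter fun j => j ≠ i, r i j) = ∑ j, r i j := by
    intro i
    rw [Finset.sum_filter]
    apply Finset.sum_congr rfl
    intro j _
    by_cases h : j = i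
    · subst h; simp [hdiag]
    · simp [h]
  simp only [h1]
  have h2 : (∑ i : Fin L, ∑ j, r i j) = 0 := by
    rw [← Finset.sum_product']
    exact Finset.sum_ninvolution (fun p => (p.2, p.1))
      (fun p => hanti p.1 p.2)
      (fun p hp => by
        intro hc
        apply hp
        have : p.1 = p.2 := (congrArg Prod.snd hc)
        rw [this, hdiag])
      (fun p => Finset.mem_univ _)
      (fun p => rfl)
  rw [h2, add_zero]
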